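/- For a quasi-Hopf algebra H and a left H-comodule algebra B, setting p̃_λ = X̃²_λ S⁻¹(X̃¹_λ β) ⊗ X̃³_λ and q̃_λ = S(x̃¹_λ)α x̃²_λ ⊗ x̃³_λ, the identities λ(q̃²_λ) p̃_λ [S⁻¹(q̃¹_λ)⊗1] = 1⊗1 and [S(p̃¹_λ)⊗1] q̃_λ λ(p̃²_λ) = 1⊗1 hold in H⊗B. -/

import Mathlib

open TensorProduct

noncomputable section

namespace QuasiHopfPaper

variable (k : Type) [Field k]
variable (H : Type) [Ring H] [Algebra k H]

/-- A quasi-bialgebra in the sense of Drinfeld. -/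
structure QuasiBialgebra where
  comul : H →ₐ[k] H ⊗[k] H
  counit : H →ₐ[k] k
  Phi : H ⊗[k] (H ⊗[k] H)
  PhiInv : H ⊗[k] (H ⊗[k] H)
  Phi_inv_mul : Phi * PhiInv = 1
  inv_Phi_mul : PhiInv * Phi = 1
  quasi_coassoc : ∀ h : H,
    Algebra.TensorProduct.map (AlgHom.id k H) comul (comul h)
      = Phi * (Algebra.TensorProduct.assoc k k k H H H)
          (Algebra.TensorProduct.map comul (AlgHom.id k H) (comul h)) * PhiInv
  counit_right : ∀ h : H,
    (Algebra.TensorProduct.rid k k H)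
      (Algebra.TensorProduct.map (AlgHom.id k H) counit (comul h)) = h
  counit_left : ∀ h : H,
    (Algebra.TensorProduct.lid k H)
      (Algebra.TensorProduct.map counit (AlgHom.id k H) (comul h)) = h
  cocycle :
    (Algebra.TensorProduct.includeRight (R := k) (A := H)
        (B := H ⊗[k] (H ⊗[k] H)) Phi)
      * (Algebra.TensorProduct.map (AlgHom.id k H)
          ((Algebra.TensorProduct.assoc k k k H H H).toAlgHom.comp
            (Algebra.TensorProduct.map comul (AlgHom.id k H))) Phi)
      * ((Algebra.TensorProduct.map (AlgHom.id k H)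
            (Algebra.TensorProduct.assoc k k k H H H).toAlgHom)
          ((Algebra.TensorProduct.assoc k k k H (H ⊗[k] H) H) (Phi ⊗ₜ[k] (1 : H))))
    = (Algebra.TensorProduct.map (AlgHom.id k H)
          (Algebra.TensorProduct.map (AlgHom.id k H) comul) Phi)
      * ((Algebra.TensorProduct.assoc k k k H H (H ⊗[k] H))
          (Algebra.TensorProduct.map comul (AlgHom.id k (H ⊗[k] H)) Phi))
  normalized :
    Algebra.TensorProduct.map (AlgHom.id k H)
      ((Algebra.TensorProduct.lid k H).toAlgHom.comp
        (Algebra.TensorProduct.map counit (AlgHom.id k H))) Phi = 1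

variable {k H}

/-- The quasi-Hopf antipode axioms for `(S, α, β)` over a quasi-bialgebra. -/
structure IsAntipode (Q : QuasiBialgebra k H) (S : H →ₗ[k] H) (α β : H) : Prop where
  anti_mul : ∀ a b : H, S (a * b) = S b * S a
  map_one : S 1 = 1
  bijective : Function.Bijective S
  left_id : ∀ h : H,
    LinearMap.mul' k H
      (TensorProduct.map S (LinearMap.mulLeft k α) (Q.comul h)) = Q.counit h • α
  right_id : ∀ h : H,
    LinearMap.mul' k H
      (TensorProduct.map (LinearMap.mulRight k β) S (Q.comul h)) = Q.counit h • β
  phi_id :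
    LinearMap.mul' k H
      (TensorProduct.map (LinearMap.mulRight k β)
        ((LinearMap.mul' k H).comp (TensorProduct.map S (LinearMap.mulLeft k α)))
        Q.Phi) = 1
  phiInv_id :
    LinearMap.mul' k H
      (TensorProduct.map ((LinearMap.mulRight k α).comp S)
        ((LinearMap.mul' k H).comp
          (TensorProduct.map LinearMap.id ((LinearMap.mulLeft k β).comp S)))
        Q.PhiInv) = 1


variable (Q : QuasiBialgebra k H)

set_option maxHeartbeats 1000000

/-- doc -/
structure LeftComoduleAlgebra (B : Type) [Ring B] [Algebra k B] where
  lambda : B →ₐ[k] H ⊗[k] B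
  Phi : H ⊗[k] (H ⊗[k] B)
  PhiInv : H ⊗[k] (H ⊗[k] B)
  Phi_inv_mul : Phi * PhiInv = 1
  inv_Phi_mul : PhiInv * Phi = 1
  coassoc : ∀ b : B,
    Algebra.TensorProduct.map (AlgHom.id k H) lambda (lambda b) * Phi
      = Phi * (Algebra.TensorProduct.assoc k k k H H B)
          (Algebra.TensorProduct.map Q.comul (AlgHom.id k B) (lambda b))
  pentagon :
    (Algebra.TensorProduct.includeRight (R := k) (A := H)
        (B := H ⊗[k] (H ⊗[k] B)) Phi)
      * (Algebra.TensorProduct.map (AlgHom.id k H)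
          ((Algebra.TensorProduct.assoc k k k H H B).toAlgHom.comp
            (Algebra.TensorProduct.map Q.comul (AlgHom.id k B))) Phi)
      * ((Algebra.TensorProduct.map (AlgHom.id k H)
            (Algebra.TensorProduct.assoc k k k H H B).toAlgHom)
          ((Algebra.TensorProduct.assoc k k k H (H ⊗[k] H) B) (Q.Phi ⊗ₜ[k] (1 : B))))
    = (Algebra.TensorProduct.map (AlgHom.id k H)
          (Algebra.TensorProduct.map (AlgHom.id k H) lambda) Phi)
      * ((Algebra.TensorProduct.assoc k k k H H (H ⊗[k] B))
          (Algebra.TensorProduct.map Q.comul (AlgHom.id k (H ⊗[k] B)) Phi))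
  counit_lambda : ∀ b : B,
    (Algebra.TensorProduct.lid k B)
      (Algebra.TensorProduct.map Q.counit (AlgHom.id k B) (lambda b)) = b
  normal_mid :
    Algebra.TensorProduct.map (AlgHom.id k H)
      ((Algebra.TensorProduct.lid k B).toAlgHom.comp
        (Algebra.TensorProduct.map Q.counit (AlgHom.id k B))) Phi = 1
  normal_left :
    (Algebra.TensorProduct.lid k (H ⊗[k] B))
      (Algebra.TensorProduct.map Q.counit (AlgHom.id k (H ⊗[k] B)) Phi) = 1

/-- A right `H`-comodule algebra over a quasi-bialgebra (Hausser–Nill). -/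
structure RightComoduleAlgebra (A : Type) [Ring A] [Algebra k A] where
  rho : A →ₐ[k] A ⊗[k] H
  Phi : A ⊗[k] (H ⊗[k] H)
  PhiInv : A ⊗[k] (H ⊗[k] H)
  Phi_inv_mul : Phi * PhiInv = 1
  inv_Phi_mul : PhiInv * Phi = 1
  coassoc : ∀ a : A,
    Phi * (Algebra.TensorProduct.assoc k k k A H H)
        (Algebra.TensorProduct.map rho (AlgHom.id k H) (rho a))
      = Algebra.TensorProduct.map (AlgHom.id k A) Q.comul (rho a) * Phi
  pentagon :
    (Algebra.TensorProduct.includeRight (R := k) (A := A)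
        (B := H ⊗[k] (H ⊗[k] H)) Q.Phi)
      * (Algebra.TensorProduct.map (AlgHom.id k A)
          ((Algebra.TensorProduct.assoc k k k H H H).toAlgHom.comp
            (Algebra.TensorProduct.map Q.comul (AlgHom.id k H))) Phi)
      * ((Algebra.TensorProduct.map (AlgHom.id k A)
            (Algebra.TensorProduct.assoc k k k H H H).toAlgHom)
          ((Algebra.TensorProduct.assoc k k k A (H ⊗[k] H) H) (Phi ⊗ₜ[k] (1 : H))))
    = (Algebra.TensorProduct.map (AlgHom.id k A)
          (Algebra.TensorProduct.map (AlgHom.id k H) Q.comul) Phi)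
      * ((Algebra.TensorProduct.assoc k k k A H (H ⊗[k] H))
          (Algebra.TensorProduct.map rho (AlgHom.id k (H ⊗[k] H)) Phi))
  counit_rho : ∀ a : A,
    (Algebra.TensorProduct.rid k k A)
      (Algebra.TensorProduct.map (AlgHom.id k A) Q.counit (rho a)) = a
  normal_mid :
    Algebra.TensorProduct.map (AlgHom.id k A)
      ((Algebra.TensorProduct.lid k H).toAlgHom.comp
        (Algebra.TensorProduct.map Q.counit (AlgHom.id k H))) Phi = 1
  normal_right :
    Algebra.TensorProduct.map (AlgHom.id k A)
      ((Algebra.TensorProduct.rid k k H).toAlgHom.comp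
        (Algebra.TensorProduct.map (AlgHom.id k H) Q.counit)) Phi = 1


section Helpers

variable {M N P Q' : Type} [AddCommGroup M] [AddCommGroup N] [AddCommGroup P]
  [AddCommGroup Q'] [Module k M] [Module k N] [Module k P] [Module k Q']

/-- Componentwise action of `M ⊗ N` on `P ⊗ Q'` coming from actions of the factors. -/
def endTensor (f : M →ₗ[k] P →ₗ[k] P) (g : N →ₗ[k] Q' →ₗ[k] Q') :
    M ⊗[k] N →ₗ[k] (P ⊗[k] Q') →ₗ[k] (P ⊗[k] Q') :=
  (TensorProduct.homTensorHomMap (RingHom.id k) P Q' P Q').comp (TensorProduct.map f g)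

end Helpers

/-- A right `H`-module coalgebra: a coalgebra in the monoidal category `M_H`. -/
structure RightModuleCoalgebra (C : Type) [AddCommGroup C] [Module k C] where
  ract : C →ₗ[k] H →ₗ[k] C
  ract_one : ∀ c : C, ract c 1 = c
  ract_mul : ∀ (c : C) (h h' : H), ract (ract c h) h' = ract c (h * h')
  comul : C →ₗ[k] C ⊗[k] C
  counit : C →ₗ[k] k
  quasi_coassoc : ∀ c : C,
    (endTensor ract.flip (endTensor ract.flip ract.flip) Q.PhiInv)
        ((TensorProduct.assoc k C C C)
          (TensorProduct.map comul LinearMap.id (comul c)))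
      = TensorProduct.map LinearMap.id comul (comul c)
  comul_ract : ∀ (c : C) (h : H),
    comul (ract c h) = (endTensor ract.flip ract.flip) (Q.comul h) (comul c)
  counit_ract : ∀ (c : C) (h : H), counit (ract c h) = counit c * Q.counit h
  counit_comul_left : ∀ c : C,
    (TensorProduct.lid k C) (TensorProduct.map counit LinearMap.id (comul c)) = c
  counit_comul_right : ∀ c : C,
    (TensorProduct.rid k C) (TensorProduct.map LinearMap.id counit (comul c)) = c

/-- A left `H`-module algebra: an algebra in the monoidal category `_H M`
(the multiplication is only quasi-associative). -/
structure LeftModuleAlgebra (A : Type) [AddCommGroup A] [Module k A] where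
  act : H →ₗ[k] A →ₗ[k] A
  act_one : ∀ a : A, act 1 a = a
  act_mul : ∀ (h h' : H) (a : A), act (h * h') a = act h (act h' a)
  mul : A →ₗ[k] A →ₗ[k] A
  one : A
  one_mul : ∀ a : A, mul one a = a
  mul_one : ∀ a : A, mul a one = a
  quasi_assoc : ∀ a a' a'' : A,
    mul (mul a a') a''
      = TensorProduct.lift mul
          ((TensorProduct.map LinearMap.id (TensorProduct.lift mul))
            ((endTensor act (endTensor act act) Q.Phi) (a ⊗ₜ[k] (a' ⊗ₜ[k] a''))))
  act_mul_distrib : ∀ (h : H) (a a' : A),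
    act h (mul a a')
      = TensorProduct.lift mul ((endTensor act act (Q.comul h)) (a ⊗ₜ[k] a'))
  act_one_elem : ∀ h : H, act h one = Q.counit h • one


section Smash

variable {A : Type} [AddCommGroup A] [Module k A]
variable {B : Type} [Ring B] [Algebra k B]

/-- The generalized smash product multiplication `A ▶< B`:
`(a ▶< b)(a' ▶< b') = (x̃¹·a)(x̃² b₋₁ · a') ▶< x̃³ b₀ b'`, built from the
`H`-action `actA` and multiplication `mulA` on `A`, the coaction `lam` on `B`
and the (inverse) reassociator `phiInv` of the comodule algebra `B`. -/
def smashMul (mulA : A →ₗ[k] A →ₗ[k] A) (actA : H →ₗ[k] A →ₗ[k] A)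
    (lam : B →ₗ[k] H ⊗[k] B) (phiInv : H ⊗[k] (H ⊗[k] B)) :
    (A ⊗[k] B) →ₗ[k] (A ⊗[k] B) →ₗ[k] (A ⊗[k] B) :=
  let aAct : H ⊗[k] A →ₗ[k] A := TensorProduct.lift actA
  let mA : A ⊗[k] A →ₗ[k] A := TensorProduct.lift mulA
  let mH : H ⊗[k] H →ₗ[k] H := LinearMap.mul' k H
  let mB : B ⊗[k] B →ₗ[k] B := LinearMap.mul' k B
  let f : ((H ⊗[k] A) ⊗[k] ((H ⊗[k] H) ⊗[k] A)) →ₗ[k] A :=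
    mA ∘ₗ TensorProduct.map aAct (aAct ∘ₗ TensorProduct.map mH LinearMap.id)
  let g : (B ⊗[k] (B ⊗[k] B)) →ₗ[k] B := mB ∘ₗ TensorProduct.map LinearMap.id mB
  let r : (B ⊗[k] ((H ⊗[k] B) ⊗[k] B)) →ₗ[k] (H ⊗[k] (B ⊗[k] (B ⊗[k] B))) :=
    (TensorProduct.assoc k H B (B ⊗[k] B)).toLinearMap
      ∘ₗ TensorProduct.map (TensorProduct.comm k B H).toLinearMap LinearMap.id
      ∘ₗ (TensorProduct.assoc k B H (B ⊗[k] B)).symm.toLinearMap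
      ∘ₗ TensorProduct.map LinearMap.id (TensorProduct.assoc k H B B).toLinearMap
  let j2 : ((H ⊗[k] A) ⊗[k] H) →ₗ[k] ((H ⊗[k] H) ⊗[k] A) :=
    (TensorProduct.assoc k H H A).symm.toLinearMap
      ∘ₗ TensorProduct.map LinearMap.id (TensorProduct.comm k A H).toLinearMap
      ∘ₗ (TensorProduct.assoc k H A H).toLinearMap
  let j : (((H ⊗[k] A) ⊗[k] (H ⊗[k] A)) ⊗[k] H) →ₗ[k]
      ((H ⊗[k] A) ⊗[k] ((H ⊗[k] H) ⊗[k] A)) :=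
    TensorProduct.map LinearMap.id j2
      ∘ₗ (TensorProduct.assoc k (H ⊗[k] A) (H ⊗[k] A) H).toLinearMap
  let σ : ((H ⊗[k] (H ⊗[k] B)) ⊗[k] ((A ⊗[k] (H ⊗[k] B)) ⊗[k] (A ⊗[k] B))) →ₗ[k]
      (((H ⊗[k] A) ⊗[k] ((H ⊗[k] H) ⊗[k] A)) ⊗[k] (B ⊗[k] (B ⊗[k] B))) :=
    TensorProduct.map j LinearMap.id
      ∘ₗ (TensorProduct.assoc k ((H ⊗[k] A) ⊗[k] (H ⊗[k] A)) H
            (B ⊗[k] (B ⊗[k] B))).symm.toLinearMap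
      ∘ₗ TensorProduct.map (TensorProduct.tensorTensorTensorComm k H H A A).toLinearMap r
      ∘ₗ (TensorProduct.tensorTensorTensorComm k (H ⊗[k] H) B (A ⊗[k] A)
            ((H ⊗[k] B) ⊗[k] B)).toLinearMap
      ∘ₗ TensorProduct.map (TensorProduct.assoc k H H B).symm.toLinearMap
          (TensorProduct.tensorTensorTensorComm k A (H ⊗[k] B) A B).toLinearMap
  let pre : ((A ⊗[k] B) ⊗[k] (A ⊗[k] B)) →ₗ[k]
      ((A ⊗[k] (H ⊗[k] B)) ⊗[k] (A ⊗[k] B)) :=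
    TensorProduct.map (TensorProduct.map LinearMap.id lam) LinearMap.id
  (TensorProduct.lift.equiv (RingHom.id k) (A ⊗[k] B) (A ⊗[k] B) (A ⊗[k] B)).symm
    (TensorProduct.map f g ∘ₗ σ
      ∘ₗ TensorProduct.mk k (H ⊗[k] (H ⊗[k] B)) _ phiInv ∘ₗ pre)

end Smash


section PQ

variable {k : Type} [Field k] {H : Type} [Ring H] [Algebra k H]
variable {B : Type} [Ring B] [Algebra k B]

/-- `p̃_λ = X̃²_λ S⁻¹(X̃¹_λ β) ⊗ X̃³_λ`, extracted from `w = Φ_λ`. -/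
def pElt (Sinv : H →ₗ[k] H) (β : H) (w : H ⊗[k] (H ⊗[k] B)) : H ⊗[k] B :=
  (TensorProduct.map
      ((LinearMap.mul' k H) ∘ₗ (TensorProduct.comm k H H).toLinearMap
        ∘ₗ TensorProduct.map (Sinv ∘ₗ LinearMap.mulRight k β) LinearMap.id)
      LinearMap.id)
    ((TensorProduct.assoc k H H B).symm w)

/-- `q̃_λ = S(x̃¹_λ) α x̃²_λ ⊗ x̃³_λ`, extracted from `w = Φ_λ⁻¹`. -/
def qElt (S : H →ₗ[k] H) (α : H) (w : H ⊗[k] (H ⊗[k] B)) : H ⊗[k] B :=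
  (TensorProduct.map
      ((LinearMap.mul' k H) ∘ₗ TensorProduct.map S (LinearMap.mulLeft k α))
      LinearMap.id)
    ((TensorProduct.assoc k H H B).symm w)

/-- The bilinear map `(x', w) ↦ (w * p) * (x' ⊗ 1)` in `H ⊗ B`. -/
def conjR (p : H ⊗[k] B) : H →ₗ[k] (H ⊗[k] B) →ₗ[k] (H ⊗[k] B) :=
  ((LinearMap.llcomp k (H ⊗[k] B) (H ⊗[k] B) (H ⊗[k] B)).flip
      (LinearMap.mulRight k p))
    ∘ₗ ((LinearMap.mul k (H ⊗[k] B)).flip ∘ₗ (TensorProduct.mk k H B).flip 1)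

/-- The bilinear map `(x', w) ↦ ((x' ⊗ 1) * q) * w` in `H ⊗ B`. -/
def conjL (q : H ⊗[k] B) : H →ₗ[k] (H ⊗[k] B) →ₗ[k] (H ⊗[k] B) :=
  (LinearMap.mul k (H ⊗[k] B)) ∘ₗ (LinearMap.mulRight k q)
    ∘ₗ (TensorProduct.mk k H B).flip 1

end PQ



set_option synthInstance.maxHeartbeats 1000000
set_option maxHeartbeats 4000000

section Inst

variable {k : Type} [Field k] {H : Type} [Ring H] [Algebra k H]
variable {B : Type} [Ring B] [Algebra k B]

instance auxRD : RightDistribClass (H ⊗[k] (H ⊗[k] (H ⊗[k] B))) :=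
  @Distrib.rightDistribClass _
    (@NonUnitalNonAssocSemiring.toDistrib _ Algebra.TensorProduct.instNonUnitalNonAssocSemiring)

instance auxLD : LeftDistribClass (H ⊗[k] (H ⊗[k] (H ⊗[k] B))) :=
  @Distrib.leftDistribClass _
    (@NonUnitalNonAssocSemiring.toDistrib _ Algebra.TensorProduct.instNonUnitalNonAssocSemiring)

instance auxMZ : MulZeroClass (H ⊗[k] (H ⊗[k] (H ⊗[k] B))) :=
  @NonUnitalNonAssocSemiring.toMulZeroClass _ Algebra.TensorProduct.instNonUnitalNonAssocSemiring

instance auxMon : Monoid (H ⊗[k] (H ⊗[k] (H ⊗[k] B))) :=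
  @MonoidWithZero.toMonoid _ (@Semiring.toMonoidWithZero _ Algebra.TensorProduct.instSemiring)

instance auxTower : IsScalarTower k (H ⊗[k] (H ⊗[k] (H ⊗[k] B))) (H ⊗[k] (H ⊗[k] (H ⊗[k] B))) :=
  Algebra.TensorProduct.isScalarTower_right

instance auxComm : SMulCommClass k (H ⊗[k] (H ⊗[k] (H ⊗[k] B))) (H ⊗[k] (H ⊗[k] (H ⊗[k] B))) :=
  Algebra.TensorProduct.sMulCommClass_right

end Inst

section Pf

variable {k : Type} [Field k] {H : Type} [Ring H] [Algebra k H]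
variable {B : Type} [Ring B] [Algebra k B]

/-- `a ⊗ (b ⊗ (c ⊗ d)) ↦ (c * (Sinv (α*(b*β)) * a)) ⊗ d`. -/
def thetaR (Sinv : H →ₗ[k] H) (α β : H) :
    H ⊗[k] (H ⊗[k] (H ⊗[k] B)) →ₗ[k] H ⊗[k] B :=
  (TensorProduct.map ((LinearMap.mul' k H) ∘ₗ (TensorProduct.comm k H H).toLinearMap)
      (LinearMap.id : B →ₗ[k] B))
  ∘ₗ (TensorProduct.assoc k H H B).symm.toLinearMap
  ∘ₗ (TensorProduct.map ((LinearMap.mul' k H) ∘ₗ (TensorProduct.comm k H H).toLinearMap)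
      (LinearMap.id : H ⊗[k] B →ₗ[k] H ⊗[k] B))
  ∘ₗ (TensorProduct.assoc k H H (H ⊗[k] B)).symm.toLinearMap
  ∘ₗ (TensorProduct.map LinearMap.id (TensorProduct.map
        (Sinv ∘ₗ LinearMap.mulLeft k α ∘ₗ LinearMap.mulRight k β) LinearMap.id))

@[simp] lemma thetaR_tmul (Sinv : H →ₗ[k] H) (α β : H) (a b c : H) (d : B) :
    thetaR Sinv α β (a ⊗ₜ (b ⊗ₜ (c ⊗ₜ d))) = (c * (Sinv (α * (b * β)) * a)) ⊗ₜ d := by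
  simp [thetaR]

/-- `a ⊗ (b ⊗ (c ⊗ d)) ↦ ((a * (β * (S b * α))) * c) ⊗ d`. -/
def thetaL (S : H →ₗ[k] H) (α β : H) :
    H ⊗[k] (H ⊗[k] (H ⊗[k] B)) →ₗ[k] H ⊗[k] B :=
  (TensorProduct.map (LinearMap.mul' k H) (LinearMap.id : B →ₗ[k] B))
  ∘ₗ (TensorProduct.assoc k H H B).symm.toLinearMap
  ∘ₗ (TensorProduct.map (LinearMap.mul' k H) (LinearMap.id : H ⊗[k] B →ₗ[k] H ⊗[k] B))
  ∘ₗ (TensorProduct.assoc k H H (H ⊗[k] B)).symm.toLinearMap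
  ∘ₗ (TensorProduct.map LinearMap.id (TensorProduct.map
        (LinearMap.mulLeft k β ∘ₗ LinearMap.mulRight k α ∘ₗ S) LinearMap.id))

@[simp] lemma thetaL_tmul (S : H →ₗ[k] H) (α β : H) (a b c : H) (d : B) :
    thetaL S α β (a ⊗ₜ (b ⊗ₜ (c ⊗ₜ d))) = ((a * (β * (S b * α))) * c) ⊗ₜ d := by
  simp [thetaL]

def iotaA : (H ⊗[k] B) →ₗ[k] H ⊗[k] (H ⊗[k] (H ⊗[k] B)) :=
  TensorProduct.mk k H (H ⊗[k] (H ⊗[k] B)) 1 ∘ₗ TensorProduct.mk k H (H ⊗[k] B) 1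

@[simp] lemma iotaA_apply (r : H ⊗[k] B) :
    (iotaA r : H ⊗[k] (H ⊗[k] (H ⊗[k] B))) = (1:H) ⊗ₜ ((1:H) ⊗ₜ r) := rfl

lemma iotaA_one : (iotaA 1 : H ⊗[k] (H ⊗[k] (H ⊗[k] B))) = 1 := by
  simp [iotaA_apply, Algebra.TensorProduct.one_def]

def iotaB : (H ⊗[k] B) →ₗ[k] H ⊗[k] (H ⊗[k] (H ⊗[k] B)) :=
  TensorProduct.map LinearMap.id
    (TensorProduct.mk k H (H ⊗[k] B) 1 ∘ₗ TensorProduct.mk k H B 1)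

@[simp] lemma iotaB_tmul (a : H) (d : B) :
    (iotaB (a ⊗ₜ d) : H ⊗[k] (H ⊗[k] (H ⊗[k] B))) = a ⊗ₜ ((1:H) ⊗ₜ ((1:H) ⊗ₜ d)) := rfl

lemma iotaB_one : (iotaB 1 : H ⊗[k] (H ⊗[k] (H ⊗[k] B))) = 1 := by
  rw [Algebra.TensorProduct.one_def (A := H) (B := B), iotaB_tmul]
  simp [Algebra.TensorProduct.one_def]

variable (Q : QuasiBialgebra k H)

def homD (L : LeftComoduleAlgebra Q B) :
    (H ⊗[k] (H ⊗[k] B)) →ₐ[k] H ⊗[k] (H ⊗[k] (H ⊗[k] B)) :=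
  Algebra.TensorProduct.map (AlgHom.id k H)
    (Algebra.TensorProduct.map (AlgHom.id k H) L.lambda)

def homA : (H ⊗[k] (H ⊗[k] B)) →ₐ[k] H ⊗[k] (H ⊗[k] (H ⊗[k] B)) :=
  Algebra.TensorProduct.includeRight (R := k) (A := H)

def homB : (H ⊗[k] (H ⊗[k] B)) →ₐ[k] H ⊗[k] (H ⊗[k] (H ⊗[k] B)) :=
  Algebra.TensorProduct.map (AlgHom.id k H)
    ((Algebra.TensorProduct.assoc k k k H H B).toAlgHom.comp
      (Algebra.TensorProduct.map Q.comul (AlgHom.id k B)))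

def homE : (H ⊗[k] (H ⊗[k] B)) →ₐ[k] H ⊗[k] (H ⊗[k] (H ⊗[k] B)) :=
  (Algebra.TensorProduct.assoc k k k H H (H ⊗[k] B)).toAlgHom.comp
    (Algebra.TensorProduct.map Q.comul (AlgHom.id k (H ⊗[k] B)))

def homC : (H ⊗[k] (H ⊗[k] H)) →ₐ[k] H ⊗[k] (H ⊗[k] (H ⊗[k] B)) :=
  (Algebra.TensorProduct.map (AlgHom.id k H)
      (Algebra.TensorProduct.assoc k k k H H B).toAlgHom).comp
    ((Algebra.TensorProduct.assoc k k k H (H ⊗[k] H) B).toAlgHom.comp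
      (Algebra.TensorProduct.includeLeft))

def homNL : (H ⊗[k] (H ⊗[k] B)) →ₐ[k] H ⊗[k] B :=
  (Algebra.TensorProduct.lid k (H ⊗[k] B)).toAlgHom.comp
    (Algebra.TensorProduct.map Q.counit (AlgHom.id k (H ⊗[k] B)))

def homNM : (H ⊗[k] (H ⊗[k] B)) →ₐ[k] H ⊗[k] B :=
  Algebra.TensorProduct.map (AlgHom.id k H)
    ((Algebra.TensorProduct.lid k B).toAlgHom.comp
      (Algebra.TensorProduct.map Q.counit (AlgHom.id k B)))

variable {Q}

@[simp] lemma homD_tmul (L : LeftComoduleAlgebra Q B) (a b : H) (c : B) :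
    homD Q L (a ⊗ₜ (b ⊗ₜ c)) = a ⊗ₜ (b ⊗ₜ (L.lambda c)) := by
  simp [homD]

@[simp] lemma homA_apply (x : H ⊗[k] (H ⊗[k] B)) :
    (homA x : H ⊗[k] (H ⊗[k] (H ⊗[k] B))) = (1:H) ⊗ₜ x := by
  simp [homA]

@[simp] lemma homB_tmul (a b : H) (c : B) :
    homB (B := B) Q (a ⊗ₜ (b ⊗ₜ c))
      = a ⊗ₜ ((Algebra.TensorProduct.assoc k k k H H B) ((Q.comul b) ⊗ₜ c)) := by
  simp [homB]

@[simp] lemma homE_tmul (a : H) (r : H ⊗[k] B) :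
    homE (B := B) Q (a ⊗ₜ r)
      = (Algebra.TensorProduct.assoc k k k H H (H ⊗[k] B)) ((Q.comul a) ⊗ₜ r) := by
  simp [homE]

@[simp] lemma homC_tmul (a b c : H) :
    homC (k := k) (B := B) (a ⊗ₜ (b ⊗ₜ c)) = a ⊗ₜ (b ⊗ₜ (c ⊗ₜ (1:B))) := by
  simp [homC]

@[simp] lemma homNL_tmul (a : H) (r : H ⊗[k] B) :
    homNL (B := B) Q (a ⊗ₜ r) = Q.counit a • r := by
  simp [homNL]

@[simp] lemma homNM_tmul (a b : H) (c : B) :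
    homNM (B := B) Q (a ⊗ₜ (b ⊗ₜ c)) = a ⊗ₜ (Q.counit b • c) := by
  simp [homNM]

/-- `a ⊗ b ↦ g b * (m * f a)` -/
def sandL (f g : H →ₗ[k] H) (m : H) : H ⊗[k] H →ₗ[k] H :=
  (LinearMap.mul' k H) ∘ₗ (TensorProduct.map g ((LinearMap.mulLeft k m) ∘ₗ f))
    ∘ₗ (TensorProduct.comm k H H).toLinearMap

@[simp] lemma sandL_tmul (f g : H →ₗ[k] H) (m : H) (a b : H) :
    sandL f g m (a ⊗ₜ b) = g b * (m * f a) := by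
  simp [sandL]

/-- `a ⊗ b ↦ f a * (m * g b)` -/
def sandR (f g : H →ₗ[k] H) (m : H) : H ⊗[k] H →ₗ[k] H :=
  (LinearMap.mul' k H) ∘ₗ (TensorProduct.map f ((LinearMap.mulLeft k m) ∘ₗ g))

@[simp] lemma sandR_tmul (f g : H →ₗ[k] H) (m : H) (a b : H) :
    sandR f g m (a ⊗ₜ b) = f a * (m * g b) := by
  simp [sandR]

section Anti

variable {S Sinv : H →ₗ[k] H} {α β : H}
variable (hS : IsAntipode Q S α β)
variable (hinv₁ : ∀ h : H, Sinv (S h) = h) (hinv₂ : ∀ h : H, S (Sinv h) = h)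

include hS hinv₁ hinv₂ in
lemma Sinv_mul (a b : H) : Sinv (a * b) = Sinv b * Sinv a := by
  calc Sinv (a * b) = Sinv (S (Sinv a) * S (Sinv b)) := by rw [hinv₂, hinv₂]
    _ = Sinv (S (Sinv b * Sinv a)) := by rw [hS.anti_mul]
    _ = Sinv b * Sinv a := hinv₁ _

include hS hinv₁ in
lemma Sinv_one : Sinv (1 : H) = 1 := by
  calc Sinv (1 : H) = Sinv (S 1) := by rw [hS.map_one]
    _ = 1 := hinv₁ 1

include hS in
lemma sandR_comul_alpha (h : H) :
    sandR S LinearMap.id α (Q.comul h) = Q.counit h • α := by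
  have he : sandR S LinearMap.id α
      = (LinearMap.mul' k H) ∘ₗ (TensorProduct.map S (LinearMap.mulLeft k α)) := by
    apply TensorProduct.ext'
    intro a b
    simp
  rw [he]
  simpa using hS.left_id h

include hS in
lemma sandR_comul_beta (h : H) :
    sandR LinearMap.id S β (Q.comul h) = Q.counit h • β := by
  have he : sandR LinearMap.id S β
      = (LinearMap.mul' k H) ∘ₗ (TensorProduct.map (LinearMap.mulRight k β) S) := by
    apply TensorProduct.ext'
    intro a b
    simp [mul_assoc]
  rw [he]
  simpa using hS.right_id h

include hS hinv₁ hinv₂ in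
lemma sandL_comul_beta (h : H) :
    sandL Sinv LinearMap.id (Sinv β) (Q.comul h) = Q.counit h • Sinv β := by
  have he : sandL Sinv LinearMap.id (Sinv β)
      = Sinv ∘ₗ ((LinearMap.mul' k H) ∘ₗ (TensorProduct.map (LinearMap.mulRight k β) S)) := by
    apply TensorProduct.ext'
    intro a b
    simp [Sinv_mul hS hinv₁ hinv₂, hinv₁, mul_assoc]
  rw [he]
  have h2 := hS.right_id h
  simp only [LinearMap.comp_apply]
  rw [h2, map_smul]

include hS hinv₁ hinv₂ in
lemma sandL_comul_alpha (h : H) :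
    sandL LinearMap.id Sinv (Sinv α) (Q.comul h) = Q.counit h • Sinv α := by
  have he : sandL LinearMap.id Sinv (Sinv α)
      = Sinv ∘ₗ ((LinearMap.mul' k H) ∘ₗ (TensorProduct.map S (LinearMap.mulLeft k α))) := by
    apply TensorProduct.ext'
    intro a b
    simp [Sinv_mul hS hinv₁ hinv₂, hinv₁, mul_assoc]
  rw [he]
  have h2 := hS.left_id h
  simp only [LinearMap.comp_apply]
  rw [h2, map_smul]

include hS hinv₁ hinv₂ in
lemma collapseE (y : H ⊗[k] (H ⊗[k] B)) (w : H ⊗[k] (H ⊗[k] (H ⊗[k] B))) :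
    thetaR Sinv α β (homE (B := B) Q y * w)
      = thetaR Sinv α β (iotaA (homNL (B := B) Q y) * w) := by
  have hSm : ∀ a b : H, Sinv (a * b) = Sinv b * Sinv a := Sinv_mul hS hinv₁ hinv₂
  induction y using TensorProduct.induction_on with
  | zero => simp
  | add y₁ y₂ ih₁ ih₂ => simp only [map_add, add_mul, ih₁, ih₂]
  | tmul y1 r =>
    induction r using TensorProduct.induction_on with
    | zero => simp
    | add r₁ r₂ ih₁ ih₂ =>
      simp only [TensorProduct.tmul_add, map_add, add_mul, ih₁, ih₂]
    | tmul y2 y3 =>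
      induction w using TensorProduct.induction_on with
      | zero => simp
      | add w₁ w₂ ih₁ ih₂ => simp only [mul_add, map_add, ih₁, ih₂]
      | tmul a ww =>
        induction ww using TensorProduct.induction_on with
        | zero => simp
        | add s₁ s₂ ih₁ ih₂ =>
          simp only [TensorProduct.tmul_add, mul_add, map_add, ih₁, ih₂]
        | tmul b cw =>
          induction cw using TensorProduct.induction_on with
          | zero => simp
          | add t₁ t₂ ih₁ ih₂ =>
            simp only [TensorProduct.tmul_add, mul_add, map_add, ih₁, ih₂]
          | tmul c d =>
            have key : ∀ u : H ⊗[k] H,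
                thetaR Sinv α β
                  (((Algebra.TensorProduct.assoc k k k H H (H ⊗[k] B)) (u ⊗ₜ (y2 ⊗ₜ y3)))
                    * (a ⊗ₜ (b ⊗ₜ (c ⊗ₜ d))))
                = ((y2 * c) * (Sinv β * (Sinv b
                    * ((sandL LinearMap.id Sinv (Sinv α)) u * a)))) ⊗ₜ (y3 * d) := by
              intro u
              induction u using TensorProduct.induction_on with
              | zero => simp
              | add u₁ u₂ ih₁ ih₂ =>
                simp only [TensorProduct.add_tmul, map_add, add_mul, mul_add,
                  TensorProduct.add_tmul, ih₁, ih₂]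
              | tmul u1 u2 =>
                simp [Algebra.TensorProduct.tmul_mul_tmul, hSm, mul_assoc]
            rw [homE_tmul, key (Q.comul y1), sandL_comul_alpha hS hinv₁ hinv₂, homNL_tmul]
            simp [hSm, mul_assoc, smul_mul_assoc, mul_smul_comm,
              TensorProduct.smul_tmul', Algebra.TensorProduct.tmul_mul_tmul]

include hS hinv₁ hinv₂ in
lemma collapseB' (g : H ⊗[k] (H ⊗[k] B)) (w : H ⊗[k] (H ⊗[k] (H ⊗[k] B))) :
    thetaR Sinv α β (w * homB (B := B) Q g)
      = thetaR Sinv α β (w * iotaB (homNM (B := B) Q g)) := by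
  have hSm : ∀ a b : H, Sinv (a * b) = Sinv b * Sinv a := Sinv_mul hS hinv₁ hinv₂
  induction g using TensorProduct.induction_on with
  | zero => simp
  | add g₁ g₂ ih₁ ih₂ => simp only [map_add, mul_add, ih₁, ih₂]
  | tmul g1 r =>
    induction r using TensorProduct.induction_on with
    | zero => simp
    | add r₁ r₂ ih₁ ih₂ =>
      simp only [TensorProduct.tmul_add, map_add, mul_add, ih₁, ih₂]
    | tmul g2 g3 =>
      induction w using TensorProduct.induction_on with
      | zero => simp
      | add w₁ w₂ ih₁ ih₂ => simp only [add_mul, map_add, ih₁, ih₂]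
      | tmul a ww =>
        induction ww using TensorProduct.induction_on with
        | zero => simp
        | add s₁ s₂ ih₁ ih₂ =>
          simp only [TensorProduct.tmul_add, add_mul, mul_add, map_add, ih₁, ih₂]
        | tmul b cw =>
          induction cw using TensorProduct.induction_on with
          | zero => simp
          | add t₁ t₂ ih₁ ih₂ =>
            simp only [TensorProduct.tmul_add, add_mul, mul_add, map_add, ih₁, ih₂]
          | tmul c d =>
            have key : ∀ u : H ⊗[k] H,
                thetaR Sinv α β
                  ((a ⊗ₜ (b ⊗ₜ (c ⊗ₜ d)))
                    * (g1 ⊗ₜ ((Algebra.TensorProduct.assoc k k k H H B) (u ⊗ₜ g3))))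
                = (c * ((sandL Sinv LinearMap.id (Sinv β)) u
                    * (Sinv b * (Sinv α * (a * g1))))) ⊗ₜ (d * g3) := by
              intro u
              induction u using TensorProduct.induction_on with
              | zero => simp
              | add u₁ u₂ ih₁ ih₂ =>
                simp only [TensorProduct.add_tmul, map_add, add_mul, mul_add,
                  TensorProduct.tmul_add, ih₁, ih₂]
              | tmul u1 u2 =>
                simp [Algebra.TensorProduct.tmul_mul_tmul, hSm, mul_assoc]
            rw [homB_tmul, key (Q.comul g2), sandL_comul_beta hS hinv₁ hinv₂, homNM_tmul]
            simp [hSm, mul_assoc, smul_mul_assoc, mul_smul_comm,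
              TensorProduct.smul_tmul', TensorProduct.tmul_smul,
              Algebra.TensorProduct.tmul_mul_tmul]

include hS in
lemma collapseB (y : H ⊗[k] (H ⊗[k] B)) (w : H ⊗[k] (H ⊗[k] (H ⊗[k] B))) :
    thetaL S α β (homB (B := B) Q y * w)
      = thetaL S α β (iotaB (homNM (B := B) Q y) * w) := by
  induction y using TensorProduct.induction_on with
  | zero => simp
  | add y₁ y₂ ih₁ ih₂ => simp only [map_add, add_mul, ih₁, ih₂]
  | tmul y1 r =>
    induction r using TensorProduct.induction_on with
    | zero => simp
    | add r₁ r₂ ih₁ ih₂ =>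
      simp only [TensorProduct.tmul_add, map_add, add_mul, ih₁, ih₂]
    | tmul y2 y3 =>
      induction w using TensorProduct.induction_on with
      | zero => simp
      | add w₁ w₂ ih₁ ih₂ => simp only [mul_add, map_add, ih₁, ih₂]
      | tmul a ww =>
        induction ww using TensorProduct.induction_on with
        | zero => simp
        | add s₁ s₂ ih₁ ih₂ =>
          simp only [TensorProduct.tmul_add, mul_add, map_add, ih₁, ih₂]
        | tmul b cw =>
          induction cw using TensorProduct.induction_on with
          | zero => simp
          | add t₁ t₂ ih₁ ih₂ =>
            simp only [TensorProduct.tmul_add, mul_add, map_add, ih₁, ih₂]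
          | tmul c d =>
            have key : ∀ u : H ⊗[k] H,
                thetaL S α β
                  ((y1 ⊗ₜ ((Algebra.TensorProduct.assoc k k k H H B) (u ⊗ₜ y3)))
                    * (a ⊗ₜ (b ⊗ₜ (c ⊗ₜ d))))
                = ((y1 * a) * (β * (S b * ((sandR S LinearMap.id α) u * c)))) ⊗ₜ (y3 * d) := by
              intro u
              induction u using TensorProduct.induction_on with
              | zero => simp
              | add u₁ u₂ ih₁ ih₂ =>
                simp only [TensorProduct.add_tmul, map_add, add_mul, mul_add,
                  TensorProduct.tmul_add, ih₁, ih₂]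
              | tmul u1 u2 =>
                simp [Algebra.TensorProduct.tmul_mul_tmul, hS.anti_mul, mul_assoc]
            rw [homB_tmul, key (Q.comul y2), sandR_comul_alpha hS, homNM_tmul]
            simp [mul_assoc, smul_mul_assoc, mul_smul_comm,
              TensorProduct.smul_tmul', TensorProduct.tmul_smul,
              Algebra.TensorProduct.tmul_mul_tmul]

include hS in
lemma collapseE' (g : H ⊗[k] (H ⊗[k] B)) (w : H ⊗[k] (H ⊗[k] (H ⊗[k] B))) :
    thetaL S α β (w * homE (B := B) Q g)
      = thetaL S α β (w * iotaA (homNL (B := B) Q g)) := by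
  induction g using TensorProduct.induction_on with
  | zero => simp
  | add g₁ g₂ ih₁ ih₂ => simp only [map_add, mul_add, ih₁, ih₂]
  | tmul g1 r =>
    induction r using TensorProduct.induction_on with
    | zero => simp
    | add r₁ r₂ ih₁ ih₂ =>
      simp only [TensorProduct.tmul_add, map_add, mul_add, ih₁, ih₂]
    | tmul g2 g3 =>
      induction w using TensorProduct.induction_on with
      | zero => simp
      | add w₁ w₂ ih₁ ih₂ => simp only [add_mul, map_add, ih₁, ih₂]
      | tmul a ww =>
        induction ww using TensorProduct.induction_on with
        | zero => simp
        | add s₁ s₂ ih₁ ih₂ =>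
          simp only [TensorProduct.tmul_add, add_mul, mul_add, map_add, ih₁, ih₂]
        | tmul b cw =>
          induction cw using TensorProduct.induction_on with
          | zero => simp
          | add t₁ t₂ ih₁ ih₂ =>
            simp only [TensorProduct.tmul_add, add_mul, mul_add, map_add, ih₁, ih₂]
          | tmul c d =>
            have key : ∀ u : H ⊗[k] H,
                thetaL S α β
                  ((a ⊗ₜ (b ⊗ₜ (c ⊗ₜ d)))
                    * ((Algebra.TensorProduct.assoc k k k H H (H ⊗[k] B)) (u ⊗ₜ (g2 ⊗ₜ g3))))
                = ((a * ((sandR LinearMap.id S β) u * (S b * (α * (c * g2))))))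
                    ⊗ₜ (d * g3) := by
              intro u
              induction u using TensorProduct.induction_on with
              | zero => simp
              | add u₁ u₂ ih₁ ih₂ =>
                simp only [TensorProduct.add_tmul, map_add, add_mul, mul_add,
                  TensorProduct.tmul_add, ih₁, ih₂]
              | tmul u1 u2 =>
                simp [Algebra.TensorProduct.tmul_mul_tmul, hS.anti_mul, mul_assoc]
            rw [homE_tmul, key (Q.comul g1), sandR_comul_beta hS, homNL_tmul]
            simp [mul_assoc, smul_mul_assoc, mul_smul_comm,
              TensorProduct.smul_tmul', TensorProduct.tmul_smul,
              Algebra.TensorProduct.tmul_mul_tmul]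

include hS hinv₁ hinv₂ in
lemma thetaC_eval (f : H ⊗[k] (H ⊗[k] H)) :
    thetaR (B := B) Sinv α β (homC (k := k) (B := B) f)
      = (Sinv (LinearMap.mul' k H
          ((TensorProduct.map ((LinearMap.mulRight k α).comp S)
            ((LinearMap.mul' k H).comp
              (TensorProduct.map LinearMap.id ((LinearMap.mulLeft k β).comp S)))) f)))
        ⊗ₜ (1 : B) := by
  have hSm : ∀ a b : H, Sinv (a * b) = Sinv b * Sinv a := Sinv_mul hS hinv₁ hinv₂
  induction f using TensorProduct.induction_on with
  | zero => simp
  | add f₁ f₂ ih₁ ih₂ =>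
    simp only [map_add, TensorProduct.add_tmul, ih₁, ih₂]
  | tmul f1 r =>
    induction r using TensorProduct.induction_on with
    | zero => simp
    | add r₁ r₂ ih₁ ih₂ =>
      simp only [TensorProduct.tmul_add, map_add, TensorProduct.add_tmul, ih₁, ih₂]
    | tmul f2 f3 =>
      simp [hSm, hinv₁, mul_assoc]

include hS in
lemma thetaC'_eval (f : H ⊗[k] (H ⊗[k] H)) :
    thetaL (B := B) S α β (homC (k := k) (B := B) f)
      = ((LinearMap.mul' k H
          ((TensorProduct.map (LinearMap.mulRight k β)
            ((LinearMap.mul' k H).comp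
              (TensorProduct.map S (LinearMap.mulLeft k α)))) f)))
        ⊗ₜ (1 : B) := by
  induction f using TensorProduct.induction_on with
  | zero => simp
  | add f₁ f₂ ih₁ ih₂ =>
    simp only [map_add, TensorProduct.add_tmul, ih₁, ih₂]
  | tmul f1 r =>
    induction r using TensorProduct.induction_on with
    | zero => simp
    | add r₁ r₂ ih₁ ih₂ =>
      simp only [TensorProduct.tmul_add, map_add, TensorProduct.add_tmul, ih₁, ih₂]
    | tmul f2 f3 =>
      simp [mul_assoc]

@[simp] lemma qElt_tmul (S : H →ₗ[k] H) (α : H) (a b : H) (c : B) :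
    qElt S α (a ⊗ₜ (b ⊗ₜ c)) = (S a * (α * b)) ⊗ₜ c := by
  simp [qElt]

@[simp] lemma pElt_tmul (Sinv : H →ₗ[k] H) (β : H) (a b : H) (c : B) :
    pElt Sinv β (a ⊗ₜ (b ⊗ₜ c)) = (b * Sinv (a * β)) ⊗ₜ c := by
  simp [pElt]

lemma conjR_apply (p : H ⊗[k] B) (x : H) (w : H ⊗[k] B) :
    conjR p x w = (w * p) * (x ⊗ₜ 1) := rfl

lemma conjL_apply (q : H ⊗[k] B) (x : H) (w : H ⊗[k] B) :
    conjL q x w = ((x ⊗ₜ 1) * q) * w := rfl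

@[simp] lemma pElt_zero (Sinv : H →ₗ[k] H) (β : H) :
    pElt Sinv β (0 : H ⊗[k] (H ⊗[k] B)) = 0 := by simp [pElt]

@[simp] lemma pElt_add (Sinv : H →ₗ[k] H) (β : H) (x y : H ⊗[k] (H ⊗[k] B)) :
    pElt Sinv β (x + y) = pElt Sinv β x + pElt Sinv β y := by simp [pElt]

@[simp] lemma qElt_zero (S : H →ₗ[k] H) (α : H) :
    qElt S α (0 : H ⊗[k] (H ⊗[k] B)) = 0 := by simp [qElt]

@[simp] lemma qElt_add (S : H →ₗ[k] H) (α : H) (x y : H ⊗[k] (H ⊗[k] B)) :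
    qElt S α (x + y) = qElt S α x + qElt S α y := by simp [qElt]

include hS hinv₁ hinv₂ in
lemma match1 (L : LeftComoduleAlgebra Q B) (g y : H ⊗[k] (H ⊗[k] B)) :
    (TensorProduct.lift (conjR (pElt Sinv β y)))
        ((TensorProduct.map Sinv L.lambda.toLinearMap) (qElt S α g))
      = thetaR Sinv α β (homD Q L g * homA y) := by
  have hSm : ∀ a b : H, Sinv (a * b) = Sinv b * Sinv a := Sinv_mul hS hinv₁ hinv₂
  induction g using TensorProduct.induction_on with
  | zero => simp
  | add g₁ g₂ ih₁ ih₂ =>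
    simp only [qElt_add, map_add, add_mul, LinearMap.map_add, ih₁, ih₂]
  | tmul g1 r =>
    induction r using TensorProduct.induction_on with
    | zero => simp
    | add r₁ r₂ ih₁ ih₂ =>
      simp only [TensorProduct.tmul_add, qElt_add, map_add, add_mul,
        LinearMap.map_add, ih₁, ih₂]
    | tmul g2 g3 =>
      rw [qElt_tmul, TensorProduct.map_tmul, TensorProduct.lift.tmul, conjR_apply,
        AlgHom.toLinearMap_apply, homD_tmul, homA_apply]
      generalize L.lambda g3 = v
      induction y using TensorProduct.induction_on with
      | zero => simp
      | add y₁ y₂ ih₁ ih₂ =>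
        simp only [pElt_add, mul_add, add_mul, TensorProduct.tmul_add, map_add, ih₁, ih₂]
      | tmul y1 r' =>
        induction r' using TensorProduct.induction_on with
        | zero => simp
        | add r₁ r₂ ih₁ ih₂ =>
          simp only [TensorProduct.tmul_add, pElt_add, mul_add, add_mul, map_add, ih₁, ih₂]
        | tmul y2 y3 =>
          rw [pElt_tmul]
          induction v using TensorProduct.induction_on with
          | zero => simp
          | add v₁ v₂ ih₁ ih₂ =>
            simp only [TensorProduct.tmul_add, mul_add, add_mul, map_add, ih₁, ih₂]
          | tmul v1 v2 =>
            simp [Algebra.TensorProduct.tmul_mul_tmul, hSm, hinv₁, mul_assoc]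

include hS hinv₁ hinv₂ in
lemma match2 (L : LeftComoduleAlgebra Q B) (g y : H ⊗[k] (H ⊗[k] B)) :
    (TensorProduct.lift (conjL (qElt S α g)))
        ((TensorProduct.map S L.lambda.toLinearMap) (pElt Sinv β y))
      = thetaL S α β (homA g * homD Q L y) := by
  induction y using TensorProduct.induction_on with
  | zero => simp
  | add y₁ y₂ ih₁ ih₂ =>
    simp only [pElt_add, map_add, mul_add, LinearMap.map_add, ih₁, ih₂]
  | tmul y1 r =>
    induction r using TensorProduct.induction_on with
    | zero => simp
    | add r₁ r₂ ih₁ ih₂ =>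
      simp only [TensorProduct.tmul_add, pElt_add, map_add, mul_add,
        LinearMap.map_add, ih₁, ih₂]
    | tmul y2 y3 =>
      rw [pElt_tmul, TensorProduct.map_tmul, TensorProduct.lift.tmul, conjL_apply,
        AlgHom.toLinearMap_apply, homD_tmul, homA_apply]
      generalize L.lambda y3 = v
      induction g using TensorProduct.induction_on with
      | zero => simp
      | add g₁ g₂ ih₁ ih₂ =>
        simp only [qElt_add, mul_add, add_mul, TensorProduct.tmul_add, map_add, ih₁, ih₂]
      | tmul g1 r' =>
        induction r' using TensorProduct.induction_on with
        | zero => simp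
        | add r₁ r₂ ih₁ ih₂ =>
          simp only [TensorProduct.tmul_add, qElt_add, mul_add, add_mul, map_add, ih₁, ih₂]
        | tmul g2 g3 =>
          rw [qElt_tmul]
          induction v using TensorProduct.induction_on with
          | zero => simp
          | add v₁ v₂ ih₁ ih₂ =>
            simp only [TensorProduct.tmul_add, mul_add, add_mul, map_add, ih₁, ih₂]
          | tmul v1 v2 =>
            simp [Algebra.TensorProduct.tmul_mul_tmul, hS.anti_mul, hinv₂, mul_assoc]

end Anti

end Pf

/-- STATEMENT 4: `λ(q̃²_λ) p̃_λ [S⁻¹(q̃¹_λ) ⊗ 1] = 1 ⊗ 1` and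
`[S(p̃¹_λ) ⊗ 1] q̃_λ λ(p̃²_λ) = 1 ⊗ 1` in `H ⊗ B`. -/
theorem pq_identities
    {k : Type} [Field k] {H : Type} [Ring H] [Algebra k H]
    {B : Type} [Ring B] [Algebra k B]
    (Q : QuasiBialgebra k H) (S Sinv : H →ₗ[k] H) (α β : H)
    (hS : IsAntipode Q S α β)
    (hinv₁ : ∀ h : H, Sinv (S h) = h) (hinv₂ : ∀ h : H, S (Sinv h) = h)
    (L : LeftComoduleAlgebra Q B) :
    (TensorProduct.lift (conjR (pElt Sinv β L.Phi)))
        ((TensorProduct.map Sinv L.lambda.toLinearMap) (qElt S α L.PhiInv)) = 1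
    ∧ (TensorProduct.lift (conjL (qElt S α L.PhiInv)))
        ((TensorProduct.map S L.lambda.toLinearMap) (pElt Sinv β L.Phi)) = 1 := by
  have pent : homA L.Phi * homB Q L.Phi * homC Q.Phi = homD Q L L.Phi * homE Q L.Phi :=
    L.pentagon
  have hNL1 : homNL Q L.Phi = 1 := L.normal_left
  have hNM1 : homNM Q L.Phi = 1 := L.normal_mid
  have hNLinv : homNL Q L.PhiInv = 1 := by
    have h2 : homNL Q L.Phi * homNL Q L.PhiInv = 1 := by
      rw [← map_mul, L.Phi_inv_mul, map_one]
    rwa [hNL1, one_mul] at h2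
  have hNMinv : homNM Q L.PhiInv = 1 := by
    have h2 : homNM Q L.Phi * homNM Q L.PhiInv = 1 := by
      rw [← map_mul, L.Phi_inv_mul, map_one]
    rwa [hNM1, one_mul] at h2
  constructor
  · rw [match1 hS hinv₁ hinv₂ L L.PhiInv L.Phi]
    have hDD : homD Q L L.PhiInv * homD Q L L.Phi = 1 := by
      rw [← map_mul, L.inv_Phi_mul]; exact (homD Q L).map_one'
    have hCC : homC (k := k) (B := B) Q.Phi * homC (k := k) (B := B) Q.PhiInv = 1 := by
      rw [← map_mul, Q.Phi_inv_mul]; exact (homC (k := k) (B := B)).map_one'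
    have hBB : homB Q L.Phi * homB Q L.PhiInv = 1 := by
      rw [← map_mul, L.Phi_inv_mul]; exact (homB (B := B) Q).map_one'
    have hM : homD Q L L.PhiInv * homA L.Phi
        = homE Q L.Phi * (homC (k := k) (B := B) Q.PhiInv * homB Q L.PhiInv) := by
      calc homD Q L L.PhiInv * homA L.Phi
          = homD Q L L.PhiInv * homA L.Phi
              * ((homB Q L.Phi * (homC (k := k) (B := B) Q.Phi * homC (k := k) (B := B) Q.PhiInv))
                  * homB Q L.PhiInv) := by
            rw [hCC, mul_one, hBB, mul_one]
        _ = (homD Q L L.PhiInv * (homA L.Phi * homB Q L.Phi * homC (k := k) (B := B) Q.Phi))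
              * (homC (k := k) (B := B) Q.PhiInv * homB Q L.PhiInv) := by
            simp only [mul_assoc]
        _ = (homD Q L L.PhiInv * (homD Q L L.Phi * homE Q L.Phi))
              * (homC (k := k) (B := B) Q.PhiInv * homB Q L.PhiInv) := by rw [pent]
        _ = (homD Q L L.PhiInv * homD Q L L.Phi)
              * (homE Q L.Phi * (homC (k := k) (B := B) Q.PhiInv * homB Q L.PhiInv)) := by
            simp only [mul_assoc]
        _ = homE Q L.Phi * (homC (k := k) (B := B) Q.PhiInv * homB Q L.PhiInv) := by
            rw [hDD, one_mul]
    rw [hM, collapseE hS hinv₁ hinv₂ L.Phi _, hNL1, iotaA_one, one_mul,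
      collapseB' hS hinv₁ hinv₂ L.PhiInv _, hNMinv, iotaB_one, mul_one,
      thetaC_eval hS hinv₁ hinv₂ Q.PhiInv, hS.phiInv_id, Sinv_one hS hinv₁]
    exact (Algebra.TensorProduct.one_def).symm
  · rw [match2 hS hinv₁ hinv₂ L L.PhiInv L.Phi]
    have hAA : homA (B := B) L.PhiInv * homA (B := B) L.Phi = 1 := by
      rw [← map_mul, L.inv_Phi_mul]; exact (homA (k := k) (H := H) (B := B)).map_one'
    have hEE : homE Q L.Phi * homE Q L.PhiInv = 1 := by
      rw [← map_mul, L.Phi_inv_mul]; exact (homE (B := B) Q).map_one'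
    have hM2 : homA L.PhiInv * homD Q L L.Phi
        = homB Q L.Phi * (homC (k := k) (B := B) Q.Phi * homE Q L.PhiInv) := by
      calc homA L.PhiInv * homD Q L L.Phi
          = homA L.PhiInv * (homD Q L L.Phi * (homE Q L.Phi * homE Q L.PhiInv)) := by
            rw [hEE, mul_one]
        _ = (homA L.PhiInv * (homD Q L L.Phi * homE Q L.Phi)) * homE Q L.PhiInv := by
            simp only [mul_assoc]
        _ = (homA L.PhiInv * (homA L.Phi * homB Q L.Phi * homC (k := k) (B := B) Q.Phi))
              * homE Q L.PhiInv := by rw [pent]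
        _ = (homA L.PhiInv * homA L.Phi)
              * (homB Q L.Phi * (homC (k := k) (B := B) Q.Phi * homE Q L.PhiInv)) := by
            simp only [mul_assoc]
        _ = homB Q L.Phi * (homC (k := k) (B := B) Q.Phi * homE Q L.PhiInv) := by
            rw [hAA, one_mul]
    rw [hM2, collapseB hS L.Phi _, hNM1, iotaB_one, one_mul,
      collapseE' hS L.PhiInv _, hNLinv, iotaA_one, mul_one,
      thetaC'_eval hS Q.Phi, hS.phi_id]
    exact (Algebra.TensorProduct.one_def).symm

end QuasiHopfPaper
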